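/- Let X be a metric space and f : X → ℝ∪{+∞} lower semicontinuous, proper, bounded below, satisfying the KL property for minimization with desingularizer φ. Let (x_k) be a sequence satisfying f(x_{k-1}) - f(x_k) ≥ δ·(limiting slope of f at x_k)² for some δ > 0, with f(x_0) sufficiently close to inf f. Then f(x_k) decreases monotonically to inf f. -/

import Mathlib

open Filter Topology

/-- The (metric) slope of `f` at `x`. -/
noncomputable def mSlope {X : Type*} [MetricSpace X] (f : X → EReal) (x : X) : EReal :=
  if f x = ⊤ then ⊤ else
    sInf {e : EReal | ∃ ε : ℝ, 0 < ε ∧ e = (ε : EReal) ∧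
      ∀ᶠ y in nhds x, f x ≤ f y + ((ε * dist x y : ℝ) : EReal)}

/-- The limiting slope of `f` at `x`: the liminf of slopes over `y → x` with `f y → f x`. -/
noncomputable def mLimSlope {X : Type*} [MetricSpace X] (f : X → EReal) (x : X) : EReal :=
  Filter.liminf (fun y => mSlope f y) ((nhds x) ⊓ Filter.comap f (nhds (f x)))

lemma mSlope_nonneg {X : Type*} [MetricSpace X] (f : X → EReal) (x : X) :
    0 ≤ mSlope f x := by
  unfold mSlope
  split
  · exact le_top
  · refine le_sInf ?_
    rintro e ⟨ε, hε, rfl, -⟩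
    exact_mod_cast hε.le

lemma mLimSlope_nonneg {X : Type*} [MetricSpace X] (f : X → EReal) (x : X) :
    0 ≤ mLimSlope f x :=
  le_liminf_of_le (by isBoundedDefault)
    (Filter.Eventually.of_forall (fun y => mSlope_nonneg f y))

/-- Value convergence: if `f` is lsc, proper, bounded below, satisfies the KL property for
minimization with desingularizer `φ` (threshold `ρ`), then there is `ε > 0` such that any
sequence satisfying the descent condition `f x_k - f x_{k+1} ≥ δ·(limSlope f x_{k+1})²`
with initial gap `< ε` has values decreasing monotonically to `inf f`. -/
theorem value_convergence {X : Type*} [MetricSpace X] (f : X → EReal)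
    (hlsc : LowerSemicontinuous f)
    (hproper : ∃ x, f x ≠ ⊤) (hnb : ∀ x, f x ≠ ⊥)
    (hbdd : ∃ b : ℝ, ∀ x, (b : EReal) ≤ f x)
    (φ φ' : ℝ → ℝ)
    (hφc : ContinuousOn φ (Set.Ici 0)) (hφ0 : φ 0 = 0)
    (hφd : ∀ t > (0 : ℝ), HasDerivAt φ (φ' t) t)
    (hφ'c : ContinuousOn φ' (Set.Ioi 0))
    (hφ'pos : ∀ t > (0 : ℝ), 0 < φ' t)
    (ρ : ℝ) (hρ : 0 < ρ)
    (hKL : ∀ x : X, 0 < f x - sInf (Set.range f) → f x - sInf (Set.range f) < (ρ : EReal) →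
      (1 : EReal) ≤ ((φ' ((f x - sInf (Set.range f)).toReal) : ℝ) : EReal) * mLimSlope f x)
    (δ : ℝ) (hδ : 0 < δ) :
    ∃ ε > (0 : ℝ), ∀ x : ℕ → X,
      (∀ k : ℕ, f (x (k+1)) + (δ : EReal) * (mLimSlope f (x (k+1)) * mLimSlope f (x (k+1)))
          ≤ f (x k)) →
      f (x 0) < sInf (Set.range f) + (ε : EReal) →
      (∀ k : ℕ, f (x (k+1)) ≤ f (x k)) ∧
        Tendsto (fun k => f (x k)) atTop (nhds (sInf (Set.range f))) := by
  set m := sInf (Set.range f) with hm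
  obtain ⟨b, hb⟩ := hbdd
  obtain ⟨x0, hx0⟩ := hproper
  have hmb : (b : EReal) ≤ m := le_sInf (by rintro e ⟨y, rfl⟩; exact hb y)
  have hm_le : ∀ y, m ≤ f y := fun y => sInf_le ⟨y, rfl⟩
  have hmt : m ≠ ⊤ := fun h => hx0 (top_le_iff.1 (h ▸ hm_le x0))
  have hmbot : m ≠ ⊥ := fun h => absurd (h ▸ hmb) (not_le.mpr (EReal.bot_lt_coe b))
  refine ⟨ρ, hρ, fun x hdesc hinit => ?_⟩
  -- monotonicity
  have hmono : ∀ k, f (x (k+1)) ≤ f (x k) := by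
    intro k
    have hL := mLimSlope_nonneg f (x (k+1))
    have h0 : (0 : EReal) ≤ (δ : EReal) *
        (mLimSlope f (x (k+1)) * mLimSlope f (x (k+1))) :=
      mul_nonneg (by exact_mod_cast hδ.le) (mul_nonneg hL hL)
    calc f (x (k+1)) = f (x (k+1)) + 0 := (add_zero _).symm
      _ ≤ f (x (k+1)) + (δ : EReal) *
          (mLimSlope f (x (k+1)) * mLimSlope f (x (k+1))) := add_le_add_right h0 _
      _ ≤ f (x k) := hdesc k
  have hA : Antitone (fun k => f (x k)) := antitone_nat_of_succ_le hmono
  have h0top : f (x 0) < ⊤ :=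
    hinit.trans_le (le_top)
  have h0top' : f (x 0) < ⊤ := by
    refine hinit.trans ?_
    exact EReal.add_lt_top hmt (EReal.coe_ne_top ρ)
  have htop : ∀ k, f (x k) < ⊤ := fun k => (hA (Nat.zero_le k)).trans_lt h0top'
  set l := ⨅ k, f (x k) with hl
  have htend : Tendsto (fun k => f (x k)) atTop (nhds l) := tendsto_atTop_iInf hA
  have hml : m ≤ l := le_iInf fun k => hm_le _
  suffices hlm : l = m by exact ⟨hmono, hlm ▸ htend⟩
  by_contra hne
  have hlt : m < l := hml.lt_of_ne (Ne.symm hne)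
  have hl0 : l ≤ f (x 0) := iInf_le _ 0
  have hltop : l ≠ ⊤ := (hl0.trans_lt h0top').ne
  have hlbot : l ≠ ⊥ := fun h => hmbot (le_bot_iff.1 (h ▸ hml))
  -- real versions
  set mr := m.toReal with hmr
  set lr := l.toReal with hlr
  have hmc : m = (mr : EReal) := (EReal.coe_toReal hmt hmbot).symm
  have hlc : l = (lr : EReal) := (EReal.coe_toReal hltop hlbot).symm
  set fk := fun k => (f (x k)).toReal with hfk
  have hfc : ∀ k, f (x k) = ((fk k : ℝ) : EReal) :=
    fun k => (EReal.coe_toReal (htop k).ne (hnb _)).symm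
  have hmrlr : mr < lr := by
    rw [hmc, hlc] at hlt; exact_mod_cast hlt
  have hlfk : ∀ k, lr ≤ fk k := by
    intro k
    have := iInf_le (fun k => f (x k)) k
    rw [← hl, hlc, hfc k] at this; exact_mod_cast this
  have hanti : ∀ k, fk k ≤ fk 0 := by
    intro k
    have h2 : f (x k) ≤ f (x 0) := hA (Nat.zero_le k)
    rw [hfc k, hfc 0] at h2; exact_mod_cast h2
  have hfk0 : fk 0 < mr + ρ := by
    have := hinit
    rw [hfc 0, hmc, ← EReal.coe_add] at this; exact_mod_cast this
  -- compact bound on φ'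
  have hsub : Set.Icc (lr - mr) (fk 0 - mr) ⊆ Set.Ioi 0 := by
    intro t ht
    exact lt_of_lt_of_le (by linarith) ht.1
  obtain ⟨z, hz, hmax⟩ := (isCompact_Icc).exists_isMaxOn
    ⟨lr - mr, Set.left_mem_Icc.2 (by linarith [hlfk 0])⟩ (hφ'c.mono hsub)
  set M := φ' z with hM
  have hMpos : 0 < M := hφ'pos z (hsub hz)
  set q := δ / M ^ 2 with hq
  have hqpos : 0 < q := by positivity
  -- per-step decrease
  have hstep : ∀ k, fk (k+1) + q ≤ fk k := by
    intro k
    set L := mLimSlope f (x (k+1)) with hL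
    have hLnn : (0 : EReal) ≤ L := mLimSlope_nonneg f (x (k+1))
    have hLtop : L ≠ ⊤ := by
      intro h
      have : f (x (k+1)) + (δ : EReal) * (L * L) = ⊤ := by
        rw [h, EReal.top_mul_top, EReal.mul_top_of_pos (by exact_mod_cast hδ),
          EReal.add_top_of_ne_bot (hnb _)]
      have h2 := hdesc k
      rw [← hL, this] at h2
      exact (htop k).ne (top_le_iff.1 h2)
    have hLbot : L ≠ ⊥ := fun h => by simp [h] at hLnn
    set lv := L.toReal with hlv
    have hLc : L = (lv : EReal) := (EReal.coe_toReal hLtop hLbot).symm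
    have hlvnn : 0 ≤ lv := by rw [hLc] at hLnn; exact_mod_cast hLnn
    -- KL inequality
    have hgap : f (x (k+1)) - m = (((fk (k+1) - mr : ℝ)) : EReal) := by
      rw [hfc (k+1), hmc, EReal.coe_sub]
    have hKL1 : (1 : EReal) ≤ ((φ' (fk (k+1) - mr) : ℝ) : EReal) * L := by
      have h1 : 0 < f (x (k+1)) - m := by
        rw [hgap]; exact_mod_cast (by linarith [hlfk (k+1)] : (0:ℝ) < fk (k+1) - mr)
      have h2 : f (x (k+1)) - m < (ρ : EReal) := by
        rw [hgap]; exact_mod_cast (by linarith [hanti (k+1)] : fk (k+1) - mr < ρ)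
      have := hKL (x (k+1)) h1 h2
      rwa [hgap, EReal.toReal_coe] at this
    have hKLr : (1 : ℝ) ≤ φ' (fk (k+1) - mr) * lv := by
      rw [hLc, ← EReal.coe_mul] at hKL1
      exact_mod_cast hKL1
    have hmem : fk (k+1) - mr ∈ Set.Icc (lr - mr) (fk 0 - mr) :=
      ⟨by linarith [hlfk (k+1)], by linarith [hanti (k+1)]⟩
    have hφ'le : φ' (fk (k+1) - mr) ≤ M := hmax hmem
    have hMl : 1 ≤ M * lv :=
      hKLr.trans (mul_le_mul_of_nonneg_right hφ'le hlvnn)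
    have hqr : q ≤ δ * (lv * lv) := by
      rw [hq, div_le_iff₀ (by positivity)]
      nlinarith [sq_nonneg (M * lv - 1)]
    have hE : ((fk (k+1) + q : ℝ) : EReal) ≤ ((fk k : ℝ) : EReal) := by
      calc ((fk (k+1) + q : ℝ) : EReal) = f (x (k+1)) + ((q : ℝ) : EReal) := by
            rw [EReal.coe_add, hfc (k+1)]
        _ ≤ f (x (k+1)) + (δ : EReal) * (L * L) := by
            refine add_le_add_right ?_ _
            rw [hLc, ← EReal.coe_mul, ← EReal.coe_mul]
            exact_mod_cast hqr
        _ ≤ f (x k) := hdesc k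
        _ = ((fk k : ℝ) : EReal) := hfc k
    exact_mod_cast hE
  -- iterate
  have hiter : ∀ k : ℕ, fk k + k * q ≤ fk 0 := by
    intro k
    induction k with
    | zero => simp
    | succ n ih =>
      have := hstep n
      push_cast
      push_cast at ih
      linarith
  obtain ⟨N, hN⟩ := exists_nat_gt ((fk 0 - b) / q)
  have hbN : b ≤ fk N := by
    have := hb (x N)
    rw [hfc N] at this; exact_mod_cast this
  have : fk 0 - b < N * q := by
    rw [div_lt_iff₀ hqpos] at hN; linarith
  linarith [hiter N]
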